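/- An infinite order C contains an A-break (for a finite order A) if and only if the covering order of A is the unique (|A|+1)-stem of C, i.e., every downward-closed subset of C of cardinality |A|+1 is order-isomorphic to Â, and such a subset exists. -/

import Mathlib

/-- The level of `x`: the cardinality of the longest chain with maximal element `x`. -/
noncomputable def level {α : Type*} [PartialOrder α] (x : α) : ℕ∞ :=
  Set.chainHeight {y | y ≤ x} (· < ·)

/-- `C` contains a break whose past is order-isomorphic to the finite poset `P`. -/
def ContainsBreak (α : Type*) [PartialOrder α] (P : Type*) [PartialOrder P] : Prop :=
  ∃ S : Set α, IsLowerSet S ∧ Sᶜ.Nonempty ∧ (∀ a ∈ S, ∀ b ∈ Sᶜ, a < b) ∧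
    Nonempty (S ≃o P)

private lemma insertIso {α A : Type} [PartialOrder α] [PartialOrder A]
    {S : Set α} {t : α} (ht : t ∉ S) (hlt : ∀ a ∈ S, a < t) (f : S ≃o A) :
    Nonempty ((insert t S : Set α) ≃o WithTop A) := by
  classical
  refine ⟨⟨⟨fun x => if h : (x : α) ∈ S then ((f ⟨x, h⟩ : A) : WithTop A) else ⊤,
    fun y => WithTop.recTopCoe ⟨t, Set.mem_insert _ _⟩
      (fun a => ⟨f.symm a, Set.mem_insert_of_mem _ (f.symm a).2⟩) y, ?_, ?_⟩, ?_⟩⟩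
  · intro x
    by_cases h : (x : α) ∈ S
    · simp only [h, dif_pos]
      rw [WithTop.recTopCoe_coe]
      apply Subtype.ext
      simp
    · simp only [h, dif_neg, not_false_iff]
      rw [WithTop.recTopCoe_top]
      apply Subtype.ext
      rcases x.2 with h1 | h2
      · exact h1.symm
      · exact absurd h2 h
  · intro y
    induction y using WithTop.recTopCoe with
    | top =>
      beta_reduce
      rw [WithTop.recTopCoe_top]
      simp only [ht, dif_neg, not_false_iff]
    | coe a =>
      beta_reduce
      rw [WithTop.recTopCoe_coe]
      rw [dif_pos (f.symm a).2]
      have h2 : (⟨((f.symm a : S) : α), (f.symm a).2⟩ : S) = f.symm a := Subtype.ext rfl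
      rw [h2, f.apply_symm_apply]
  · intro x y
    simp only [Equiv.coe_fn_mk]
    by_cases hx : (x : α) ∈ S <;> by_cases hy : (y : α) ∈ S
    · rw [dif_pos hx, dif_pos hy, WithTop.coe_le_coe, f.le_iff_le]
      rfl
    · have hyt : (y : α) = t := by rcases y.2 with h | h; exact h; exact absurd h hy
      rw [dif_pos hx, dif_neg hy]
      simp only [le_top, true_iff]
      show (x : α) ≤ (y : α)
      rw [hyt]; exact (hlt _ hx).le
    · have hxt : (x : α) = t := by rcases x.2 with h | h; exact h; exact absurd h hx
      rw [dif_neg hx, dif_pos hy]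
      simp only [top_le_iff]
      constructor
      · intro h; exact absurd h (WithTop.coe_ne_top)
      · intro h
        have : (x : α) ≤ (y : α) := h
        rw [hxt] at this
        exact absurd (lt_of_le_of_lt this (hlt _ hy)) (lt_irrefl t)
    · have hxt : (x : α) = t := by rcases x.2 with h | h; exact h; exact absurd h hx
      have hyt : (y : α) = t := by rcases y.2 with h | h; exact h; exact absurd h hy
      rw [dif_neg hx, dif_neg hy]
      simp only [le_refl, true_iff]
      show (x : α) ≤ (y : α)
      rw [hxt, hyt]

private lemma stripIso {α A : Type} [PartialOrder α] [PartialOrder A]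
    {T : Set α} (e : T ≃o WithTop A) :
    Nonempty ((T \ {((e.symm ⊤ : T) : α)} : Set α) ≃o A) := by
  set t : α := ((e.symm ⊤ : T) : α) with htdef
  have hne : ∀ x : (T \ {t} : Set α), e ⟨x.1, x.2.1⟩ ≠ ⊤ := by
    intro x hc
    have : (⟨x.1, x.2.1⟩ : T) = e.symm ⊤ := by
      rw [← hc, e.symm_apply_apply]
    have : (x : α) = t := congrArg Subtype.val this
    exact x.2.2 this
  have hmem : ∀ a : A, ((e.symm (a : WithTop A) : T) : α) ∈ (T \ {t} : Set α) := by
    intro a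
    refine ⟨(e.symm (a : WithTop A)).2, fun hc => ?_⟩
    have : e.symm (a : WithTop A) = e.symm ⊤ := Subtype.ext hc
    have := e.symm.injective this
    exact WithTop.coe_ne_top this
  refine ⟨⟨⟨fun x => (e ⟨x.1, x.2.1⟩).untop (hne x),
    fun a => ⟨((e.symm (a : WithTop A) : T) : α), hmem a⟩, ?_, ?_⟩, ?_⟩⟩
  · intro x
    apply Subtype.ext
    show ((e.symm _ : T) : α) = (x : α)
    rw [WithTop.coe_untop, e.symm_apply_apply]
  · intro a
    have h1 : (⟨((e.symm (a : WithTop A) : T) : α), hmem a⟩ : (T \ {t} : Set α)).1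
        = ((e.symm (a : WithTop A) : T) : α) := rfl
    apply WithTop.coe_injective
    rw [WithTop.coe_untop]
    have : (⟨((e.symm (a : WithTop A) : T) : α), (hmem a).1⟩ : T) = e.symm (a : WithTop A) :=
      Subtype.ext rfl
    rw [this, e.apply_symm_apply]
  · intro x y
    show (e ⟨x.1, x.2.1⟩).untop (hne x) ≤ (e ⟨y.1, y.2.1⟩).untop (hne y) ↔ x ≤ y
    rw [← WithTop.coe_le_coe, WithTop.coe_untop, WithTop.coe_untop, e.le_iff_le]
    rfl

private lemma iso_max {α A : Type} [PartialOrder α] [PartialOrder A]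
    {T : Set α} (e : T ≃o WithTop A) {x : α} (hx : x ∈ T) :
    x ≤ ((e.symm ⊤ : T) : α) := by
  have : (⟨x, hx⟩ : T) ≤ e.symm ⊤ := by
    rw [← e.le_iff_le, e.apply_symm_apply]
    exact le_top
  exact this

/-- An infinite order `C` contains an `A`-break if and only if the covering
order `Â` (modelled as `WithTop A`) is the unique `(|A|+1)`-stem of `C`:
there is a downward-closed subset of cardinality `|A|+1`, and every such
subset is order-isomorphic to `Â`. -/
theorem containsBreak_iff_unique_cover_stem
    {α : Type} [PartialOrder α] [Countable α] [Infinite α]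
    (hlf : ∀ x : α, {y : α | y ≤ x}.Finite)
    (A : Type) [PartialOrder A] [Fintype A] :
    ContainsBreak α A ↔
      ((∃ T : Set α, IsLowerSet T ∧ T.ncard = Fintype.card A + 1) ∧
       ∀ T : Set α, IsLowerSet T → T.ncard = Fintype.card A + 1 →
         Nonempty (T ≃o WithTop A)) := by
  constructor
  · rintro ⟨S, hSlow, ⟨b, hb⟩, hbrk, ⟨f⟩⟩
    have hSfinite : S.Finite := by
      have : Finite S := Finite.of_equiv A f.symm.toEquiv
      exact Set.toFinite S
    have hScard : S.ncard = Fintype.card A := by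
      rw [← Nat.card_coe_set_eq, Nat.card_congr f.toEquiv, Nat.card_eq_fintype_card]
    -- find a minimal element of Sᶜ below b
    have hFfin : ({y | y ≤ b} ∩ Sᶜ).Finite := (hlf b).inter_of_left _
    obtain ⟨m, hmF, hmin⟩ : ∃ m ∈ ({y | y ≤ b} ∩ Sᶜ), ∀ y ∈ ({y | y ≤ b} ∩ Sᶜ), y ≤ m → m = y := by
      obtain ⟨m, h1, h2⟩ := Set.Finite.exists_minimalFor id _ hFfin ⟨b, le_refl b, hb⟩
      exact ⟨m, h1, fun y hy hle => le_antisymm (h2 hy hle) hle⟩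
    have hmS : m ∉ S := hmF.2
    have hlow : IsLowerSet (insert m S) := by
      intro x y hyx hx
      rcases hx with hx | hx
      · by_cases hyS : y ∈ S
        · exact Set.mem_insert_of_mem _ hyS
        · have hyF : y ∈ {y | y ≤ b} ∩ Sᶜ := ⟨le_trans (hx ▸ hyx) hmF.1, hyS⟩
          have := hmin y hyF (hx ▸ hyx)
          exact Set.mem_insert_iff.mpr (Or.inl this.symm)
      · exact Set.mem_insert_of_mem _ (hSlow hyx hx)
    have hcard : (insert m S).ncard = Fintype.card A + 1 := by
      rw [Set.ncard_insert_of_notMem hmS hSfinite, hScard]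
    refine ⟨⟨insert m S, hlow, hcard⟩, ?_⟩
    intro T hTlow hTcard
    have hTfin : T.Finite := by
      by_contra hc
      rw [Set.Infinite.ncard hc] at hTcard
      omega
    have hTS : ¬ T ⊆ S := by
      intro hc
      have := Set.ncard_le_ncard hc hSfinite
      omega
    obtain ⟨t, htT, htS⟩ := Set.not_subset.mp hTS
    have hlt : ∀ a ∈ S, a < t := fun a ha => hbrk a ha t htS
    have hST : S ⊆ T := fun a ha => hTlow (hlt a ha).le htT
    have hins : insert t S = T := by
      apply Set.eq_of_subset_of_ncard_le
      · exact Set.insert_subset htT hST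
      · rw [Set.ncard_insert_of_notMem htS hSfinite, hScard, hTcard]
      · exact hTfin
    rw [← hins]
    exact insertIso htS hlt f
  · rintro ⟨⟨T, hTlow, hTcard⟩, huniq⟩
    obtain ⟨e⟩ := huniq T hTlow hTcard
    set t : α := ((e.symm ⊤ : T) : α) with htdef
    have htT : t ∈ T := (e.symm ⊤).2
    have htmax : ∀ x ∈ T, x ≤ t := fun x hx => iso_max e hx
    have hTfin : T.Finite := by
      by_contra hc
      rw [Set.Infinite.ncard hc] at hTcard
      omega
    set S : Set α := T \ {t} with hSdef
    have hSlow : IsLowerSet S := by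
      intro x y hyx hx
      refine ⟨hTlow hyx hx.1, fun hyt => ?_⟩
      have : t ≤ x := hyt ▸ hyx
      exact hx.2 (le_antisymm (htmax x hx.1) this)
    have htS : t ∉ S := fun hc => hc.2 rfl
    have hScard : S.ncard = Fintype.card A := by
      rw [hSdef, Set.ncard_diff_singleton_of_mem htT, hTcard]
      omega
    have hSfin : S.Finite := hTfin.subset Set.diff_subset
    refine ⟨S, hSlow, ⟨t, htS⟩, ?_, stripIso e⟩
    intro a ha b hb
    -- find minimal element m of Sᶜ below b
    have hFfin : ({y | y ≤ b} ∩ Sᶜ).Finite := (hlf b).inter_of_left _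
    obtain ⟨m, hmF, hmin⟩ : ∃ m ∈ ({y | y ≤ b} ∩ Sᶜ), ∀ y ∈ ({y | y ≤ b} ∩ Sᶜ), y ≤ m → m = y := by
      obtain ⟨m, h1, h2⟩ := Set.Finite.exists_minimalFor id _ hFfin ⟨b, le_refl b, hb⟩
      exact ⟨m, h1, fun y hy hle => le_antisymm (h2 hy hle) hle⟩
    have hmS : m ∉ S := hmF.2
    have hUlow : IsLowerSet (insert m S) := by
      intro x y hyx hx
      rcases hx with hx | hx
      · by_cases hyS : y ∈ S
        · exact Set.mem_insert_of_mem _ hyS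
        · have hyF : y ∈ {y | y ≤ b} ∩ Sᶜ := ⟨le_trans (hx ▸ hyx) hmF.1, hyS⟩
          have := hmin y hyF (hx ▸ hyx)
          exact Set.mem_insert_iff.mpr (Or.inl this.symm)
      · exact Set.mem_insert_of_mem _ (hSlow hyx hx)
    have hUcard : (insert m S).ncard = Fintype.card A + 1 := by
      rw [Set.ncard_insert_of_notMem hmS hSfin, hScard]
    obtain ⟨e2⟩ := huniq (insert m S) hUlow hUcard
    set u : α := ((e2.symm ⊤ : (insert m S : Set α)) : α) with hudef
    have huU : u ∈ insert m S := (e2.symm ⊤).2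
    have humax : ∀ x ∈ insert m S, x ≤ u := fun x hx => iso_max e2 hx
    rcases huU with hu | hu
    · -- u = m : then a ≤ m ≤ b
      have ham : a ≤ m := hu ▸ humax a (Set.mem_insert_of_mem _ ha)
      have hab : a ≤ b := le_trans ham hmF.1
      exact lt_of_le_of_ne hab (fun hc => hb (hc ▸ ha))
    · -- u ∈ S : then m ∈ S, contradiction
      exact absurd (hSlow (humax m (Set.mem_insert _ _)) hu) hmS
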